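/- Let 𝕊 : Matrix 𝒮 ℛ ℝ with 𝒮, ℛ finite types, let C ⊆ 𝒮 be nonempty, and let x : 𝒮 → ℝ satisfy x i > 0 for all i and Matrix.vecMul x 𝕊 = 0 (a positive conservation law). If there exists a positive flow v : ℛ → ℝ with (𝕊.mulVec v) c > 0 for all c ∈ C, then there exist i ∈ 𝒮 with i ∉ C and r ∈ ℛ such that 𝕊 i r < 0. -/
import Mathlib


open Matrix

/-- Theorem: if a subnetwork with stoichiometric matrix `𝕊` admits a
positive conservation law `x` and there is a strictly positive flow under
which all core species (the set `C`) are strictly produced, then some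
non-core species is net consumed by some reaction (the union of the food
set and the non-core member set is nonempty). -/
theorem positiveConservation_nonCore_consumed {𝒮 ℛ : Type*}
    [Fintype 𝒮] [Fintype ℛ]
    (𝕊 : Matrix 𝒮 ℛ ℝ) (C : Set 𝒮) (hC : C.Nonempty)
    (x : 𝒮 → ℝ) (hx : ∀ i, 0 < x i) (hcons : Matrix.vecMul x 𝕊 = 0)
    (hflow : ∃ v : ℛ → ℝ, (∀ r, 0 < v r) ∧ ∀ c ∈ C, 0 < 𝕊.mulVec v c) :
    ∃ i : 𝒮, i ∉ C ∧ ∃ r : ℛ, 𝕊 i r < 0 := by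
  obtain ⟨v, hv, hcore⟩ := hflow
  have hsum : ∑ i, x i * 𝕊.mulVec v i = 0 := by
    have := dotProduct_mulVec x 𝕊 v
    rw [hcons] at this
    simpa [dotProduct] using this
  -- there must be some i with (𝕊.mulVec v) i < 0
  have : ∃ i, 𝕊.mulVec v i < 0 := by
    by_contra h
    push_neg at h
    obtain ⟨c, hc⟩ := hC
    have hpos : 0 < ∑ i, x i * 𝕊.mulVec v i := by
      refine Finset.sum_pos' (fun i _ => mul_nonneg (hx i).le (h i)) ⟨c, Finset.mem_univ c, ?_⟩
      exact mul_pos (hx c) (hcore c hc)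
    linarith
  obtain ⟨i, hi⟩ := this
  have hiC : i ∉ C := fun h => absurd (hcore i h) (not_lt.2 hi.le)
  refine ⟨i, hiC, ?_⟩
  by_contra h
  push_neg at h
  have : 0 ≤ 𝕊.mulVec v i :=
    Finset.sum_nonneg fun r _ => mul_nonneg (h r) (hv r).le
  linarith
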